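/- Let C = x_1 … x_m and D = y_1 … y_n be digraph cycles represented as pointed cycles by their orientation strings, let w ≥ 1 be an integer and i a vertex of D. There is a wind-w monotone homomorphism φ : C → D with φ(c_0) = i if and only if σ^i(D^w) ≤* C. -/
import Mathlib


open scoped Classical

namespace Recon

/-- Orientation letters for edges of a digraph cycle: `+`, `-`, `*`. -/
inductive Orient : Type
  | plus
  | minus
  | star
deriving DecidableEq

/-- A forward arc is allowed along an edge with this orientation letter. -/
def Orient.fwd : Orient → Prop
  | Orient.plus => True
  | Orient.minus => False
  | Orient.star => True

/-- A backward arc is allowed along an edge with this orientation letter. -/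
def Orient.bwd : Orient → Prop
  | Orient.plus => False
  | Orient.minus => True
  | Orient.star => True

/-- The arc relation of the reflexive digraph cycle on `ZMod m` whose orientation
string is `f`, where `f c` is the orientation of the edge from `c` to `c + 1`. -/
def cycRel {m : ℕ} (f : ZMod m → Orient) (u v : ZMod m) : Prop :=
  u = v ∨ (v = u + 1 ∧ (f u).fwd) ∨ (u = v + 1 ∧ (f v).bwd)

/-- `φ` is a digraph homomorphism. -/
def IsHom {α β : Type*} (rG : α → α → Prop) (rH : β → β → Prop) (φ : α → β) : Prop :=
  ∀ u v, rG u v → rH (φ u) (φ v)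

/-- The arc relation of the Hom-graph `Hom(G,H)`. -/
def HomArc {α β : Type*} (rG : α → α → Prop) (rH : β → β → Prop) (φ ψ : α → β) : Prop :=
  ∀ u v, rG u v → rH (φ u) (ψ v)

/-- `φψ` is an edge of the Hom-graph. -/
def HomEdge {α β : Type*} (rG : α → α → Prop) (rH : β → β → Prop) (φ ψ : α → β) : Prop :=
  HomArc rG rH φ ψ ∨ HomArc rG rH ψ φ

/-- The contribution of the edge `c (c+1)` of `C` to the increase of `φ`:
`1` if increasing, `-1` if decreasing, `0` if stationary. -/
def edgeVal {m n : ℕ} (φ : ZMod m → ZMod n) (c : ZMod m) : ℤ :=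
  if φ (c + 1) = φ c + 1 then 1 else if φ (c + 1) = φ c - 1 then -1 else 0

/-- The increase of a map between cycles: #increasing − #decreasing edges. -/
def increase {m n : ℕ} (φ : ZMod m → ZMod n) : ℤ :=
  ∑ j ∈ Finset.range m, edgeVal φ ((j : ℕ) : ZMod m)

/-- The increase of the subpath `c_a … c_{a+L}`. -/
def partialInc {m n : ℕ} (φ : ZMod m → ZMod n) (a : ZMod m) (L : ℕ) : ℤ :=
  ∑ j ∈ Finset.range L, edgeVal φ (a + ((j : ℕ) : ZMod m))

/-- `φ` has wind `w`, i.e. its increase is `w * n`. -/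
def HasWind {m n : ℕ} (φ : ZMod m → ZMod n) (w : ℤ) : Prop :=
  increase φ = w * (n : ℤ)

/-- A reflexive digraph cycle is non-contractible if it has length at least 4
or is a directed 3-cycle. -/
def NonContractible {n : ℕ} (f : ZMod n → Orient) : Prop :=
  4 ≤ n ∨ (n = 3 ∧ ((∀ i, f i = Orient.plus) ∨ (∀ i, f i = Orient.minus)))

/-- `φ` is increasing: every edge increasing or stationary, not all stationary. -/
def IncMap {m n : ℕ} (φ : ZMod m → ZMod n) : Prop :=
  (∀ c, φ (c + 1) = φ c + 1 ∨ φ (c + 1) = φ c) ∧ ∃ c, φ (c + 1) = φ c + 1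

/-- `φ` is decreasing: every edge decreasing. -/
def DecMap {m n : ℕ} (φ : ZMod m → ZMod n) : Prop :=
  ∀ c, φ (c + 1) = φ c - 1

/-- `φ` is monotone: increasing or decreasing. -/
def MonMap {m n : ℕ} (φ : ZMod m → ZMod n) : Prop :=
  IncMap φ ∨ DecMap φ

/-- `φ` is monotone in the weak sense where constant maps also count. -/
def MonOrConst {m n : ℕ} (φ : ZMod m → ZMod n) : Prop :=
  (∀ c, φ (c + 1) = φ c + 1 ∨ φ (c + 1) = φ c) ∨ DecMap φ

/-- `Y ≤* X`: `Y` is a `*`-substring of `X`, via a strictly increasing selection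
function `α` with `Y i = X (α i)` unless `Y i = *`. -/
def StarSub {p q : ℕ} (Y : Fin p → Orient) (X : Fin q → Orient) : Prop :=
  ∃ α : Fin p → Fin q, StrictMono α ∧ ∀ i, Y i = X (α i) ∨ Y i = Orient.star

/-- The orientation string of the (pointed) cycle `f`. -/
def cycStr {m : ℕ} (f : ZMod m → Orient) : Fin m → Orient :=
  fun j => f ((j : ℕ) : ZMod m)

/-- The orientation string `σ^i(Y^k)` = `(σ^i Y)^k`: the `i`-th shift of the
`k`-fold concatenation of the string of the cycle `fY`. -/
def shiftPowStr {s : ℕ} (fY : ZMod s → Orient) (k : ℕ) (i : ZMod s) :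
    Fin (k * s) → Orient :=
  fun j => fY (i + ((j : ℕ) : ZMod s))

/-- The orientation string `σ^i(Y)^k y_{i+1}` : the `i`-th shift of the `k`-fold
concatenation of the string of `fY`, extended by its own first letter. -/
def shiftPowExtStr {s : ℕ} (fY : ZMod s → Orient) (k : ℕ) (i : ZMod s) :
    Fin (k * s + 1) → Orient :=
  fun j => fY (i + ((j : ℕ) : ZMod s))

/-- Every vertex that moves from `φ` to `ψ`, moves up. -/
def MovesUpOnly {m n : ℕ} (φ ψ : ZMod m → ZMod n) : Prop :=
  ∀ c, ψ c = φ c ∨ ψ c = φ c + 1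

/-- Every vertex that moves from `φ` to `ψ`, moves down. -/
def MovesDownOnly {m n : ℕ} (φ ψ : ZMod m → ZMod n) : Prop :=
  ∀ c, ψ c = φ c ∨ ψ c = φ c - 1

/-- `φψ` is an up edge of the Hom-graph. -/
def UpEdge {m n : ℕ} (rC : ZMod m → ZMod m → Prop) (rD : ZMod n → ZMod n → Prop)
    (φ ψ : ZMod m → ZMod n) : Prop :=
  HomEdge rC rD φ ψ ∧ MovesUpOnly φ ψ

/-- `φ` and `ψ` are joined by a path (walk) inside the induced subgraph on `S`. -/
def ConnIn {m n : ℕ} (rC : ZMod m → ZMod m → Prop) (rD : ZMod n → ZMod n → Prop)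
    (S : Set (ZMod m → ZMod n)) (φ ψ : ZMod m → ZMod n) : Prop :=
  Relation.ReflTransGen (fun a b => a ∈ S ∧ b ∈ S ∧ HomEdge rC rD a b) φ ψ

/-- `ψ` is reachable from `φ` by a path of up edges inside `S`. -/
def UpReachIn {m n : ℕ} (rC : ZMod m → ZMod m → Prop) (rD : ZMod n → ZMod n → Prop)
    (S : Set (ZMod m → ZMod n)) (φ ψ : ZMod m → ZMod n) : Prop :=
  Relation.ReflTransGen (fun a b => a ∈ S ∧ b ∈ S ∧ UpEdge rC rD a b) φ ψ

/-- One step of a path of up edges between homomorphisms. -/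
def UpStep {m n : ℕ} (rC : ZMod m → ZMod m → Prop) (rD : ZMod n → ZMod n → Prop)
    (φ ψ : ZMod m → ZMod n) : Prop :=
  IsHom rC rD φ ∧ IsHom rC rD ψ ∧ UpEdge rC rD φ ψ

/-- The set of vertices on which `φ` and `φ'` differ. -/
def Neq {α β : Type*} (φ φ' : α → β) : Set α := {g | φ g ≠ φ' g}

/-- The map `φ_T`, agreeing with `φ'` on `T` and with `φ` elsewhere. -/
noncomputable def refineMap {α β : Type*} (φ φ' : α → β) (T : Set α) : α → β :=
  fun g => if g ∈ T then φ' g else φ g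

/-- The edge `φφ'` is non-refinable: no nonempty proper subset `T` of `Neq φ φ'`
yields a homomorphism `φ_T`. -/
def NonRefinable {α β : Type*} (rG : α → α → Prop) (rH : β → β → Prop)
    (φ φ' : α → β) : Prop :=
  ¬ ∃ T : Set α, T.Nonempty ∧ T ⊂ Neq φ φ' ∧ IsHom rG rH (refineMap φ φ' T)

/-- `T` is a strong component of the digraph `r`. -/
def IsStrongComponent {α : Type*} (r : α → α → Prop) (T : Set α) : Prop :=
  T.Nonempty ∧ (∀ u ∈ T, ∀ v ∈ T, Relation.ReflTransGen r u v) ∧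
    ∀ T' : Set α, T ⊆ T' → (∀ u ∈ T', ∀ v ∈ T', Relation.ReflTransGen r u v) → T' = T

/-- `T` has no arcs out to vertices not in `T`. -/
def IsTerminal {α : Type*} (r : α → α → Prop) (T : Set α) : Prop :=
  ∀ u ∈ T, ∀ v, r u v → v ∈ T

/-- `Mon_1(C,D;i)`: monotone wind-1 homomorphisms `φ` with `φ c₀ = i`. -/
def Mon1 {m n : ℕ} (fC : ZMod m → Orient) (fD : ZMod n → Orient) (i : ZMod n) :
    Set (ZMod m → ZMod n) :=
  {φ | IsHom (cycRel fC) (cycRel fD) φ ∧ MonMap φ ∧ increase φ = (n : ℤ) ∧ φ 0 = i}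

/-- A one-step up edge: an edge from `φ` obtained by moving all the vertices of a
subpath of `C` mapped to a single vertex `d` up to `d + 1`. -/
def OneStepUp {m n : ℕ} (rC : ZMod m → ZMod m → Prop) (rD : ZMod n → ZMod n → Prop)
    (φ φ' : ZMod m → ZMod n) : Prop :=
  HomEdge rC rD φ φ' ∧
    ∃ (a : ZMod m) (k : ℕ) (d : ZMod n), k < m ∧
      (∀ j : ℕ, j ≤ k → φ (a + ((j : ℕ) : ZMod m)) = d) ∧
      ∀ c, φ' c = if ∃ j : ℕ, j ≤ k ∧ c = a + ((j : ℕ) : ZMod m) then d + 1 else φ c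

/-- The number of increasing edges of `φ` among the first `j` edges of `C`. -/
def incBefore {m n : ℕ} (φ : ZMod m → ZMod n) (j : ℕ) : ℕ :=
  ((Finset.range j).filter fun t =>
    φ (((t : ℕ) : ZMod m) + 1) = φ ((t : ℕ) : ZMod m) + 1).card

/-- One cutback-pushing step: `φ'` is obtained from `φ` by replacing the values of
`φ` on a cutback `c_a … c_{a+L}` by `φ a`. -/
def CutbackStep {m n : ℕ} (φ φ' : ZMod m → ZMod n) : Prop :=
  ∃ (a : ZMod m) (L : ℕ), L < m ∧ partialInc φ a L = 0 ∧
    (∀ j : ℕ, 0 < j → j < L → partialInc φ a j < 0) ∧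
    ∀ c, φ' c = if ∃ j : ℕ, j ≤ L ∧ c = a + ((j : ℕ) : ZMod m) then φ a else φ c

/-- `Mon_1^+(C,D;i)`: wind-1 homomorphisms whose monotone push-up is in `Mon_1(C,D;i)`. -/
def Mon1Plus {m n : ℕ} (fC : ZMod m → Orient) (fD : ZMod n → Orient) (i : ZMod n) :
    Set (ZMod m → ZMod n) :=
  {φ | IsHom (cycRel fC) (cycRel fD) φ ∧ increase φ = (n : ℤ) ∧
    ∃ ψ ∈ Mon1 fC fD i, Relation.ReflTransGen CutbackStep φ ψ}


section AuxProof
open Finset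

lemma aux_one_ne_zero {n : ℕ} (hn : 3 ≤ n) : (1 : ZMod n) ≠ 0 := by
  intro h
  have h2 := (ZMod.natCast_eq_zero_iff 1 n).mp (by exact_mod_cast h)
  have := Nat.le_of_dvd one_pos h2; omega

lemma aux_two_ne_zero {n : ℕ} (hn : 3 ≤ n) : (2 : ZMod n) ≠ 0 := by
  intro h
  have h2 := (ZMod.natCast_eq_zero_iff 2 n).mp (by exact_mod_cast h)
  have := Nat.le_of_dvd (by norm_num) h2; omega

lemma aux_add_one_ne {n : ℕ} (hn : 3 ≤ n) (x : ZMod n) : x + 1 ≠ x :=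
  fun h => aux_one_ne_zero hn (add_eq_left.mp h)

lemma aux_ne_add_two {n : ℕ} (hn : 3 ≤ n) (x : ZMod n) : x ≠ x + 1 + 1 := by
  intro h
  rw [add_assoc, one_add_one_eq_two] at h
  exact aux_two_ne_zero hn (left_eq_add.mp h)

lemma aux_sub_one_ne {n : ℕ} (hn : 3 ≤ n) (x : ZMod n) : x ≠ x - 1 :=
  fun h => aux_one_ne_zero hn (sub_eq_self.mp h.symm)

lemma aux_add_ne_sub {n : ℕ} (hn : 3 ≤ n) (x : ZMod n) : x - 1 ≠ x + 1 := by
  intro h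
  have : x = x + 1 + 1 := by rw [← h]; ring
  exact aux_ne_add_two hn x this

lemma fwd_cases {o : Orient} (h : o.fwd) : o = Orient.plus ∨ o = Orient.star := by
  cases o <;> simp_all [Orient.fwd]

lemma bwd_cases {o : Orient} (h : o.bwd) : o = Orient.minus ∨ o = Orient.star := by
  cases o <;> simp_all [Orient.bwd]

lemma aux_card_filter_lt_fin {k : ℕ} (j : Fin k) :
    (Finset.univ.filter (fun j' => j' < j)).card = (j : ℕ) := by
  have : Finset.univ.filter (fun j' => j' < j) = Finset.Iio j := by ext x; simp
  rw [this, Fin.card_Iio]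

/-- counting function for the backward construction -/
noncomputable def cntFn {m k : ℕ} (α : Fin k → Fin m) (t : ℕ) : ℕ :=
  (Finset.univ.filter (fun j : Fin k => (α j : ℕ) < t)).card

/-- the homomorphism for the backward construction -/
noncomputable def bwdMap {m n k : ℕ} (α : Fin k → Fin m) (i : ZMod n) : ZMod m → ZMod n :=
  fun c => i + ((cntFn α c.val : ℕ) : ZMod n)

lemma cntFn_zero {m k : ℕ} (α : Fin k → Fin m) : cntFn α 0 = 0 := by
  simp [cntFn]

lemma cntFn_succ {m k : ℕ} (α : Fin k → Fin m) (hαinj : Function.Injective fun j => ((α j : ℕ))) (t : ℕ) :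
    cntFn α (t + 1) = cntFn α t + (if ∃ j, (α j : ℕ) = t then 1 else 0) := by
  classical
  have h1 : (univ.filter fun j : Fin k => (α j : ℕ) < t + 1)
      = (univ.filter fun j : Fin k => (α j : ℕ) < t) ∪ (univ.filter fun j : Fin k => (α j : ℕ) = t) := by
    ext x; simp only [mem_union, mem_filter, mem_univ, true_and]; omega
  have hdisj : Disjoint (univ.filter fun j : Fin k => (α j : ℕ) < t)
      (univ.filter fun j : Fin k => (α j : ℕ) = t) := by
    rw [Finset.disjoint_left]
    intro x hx hx'
    simp only [mem_filter, mem_univ, true_and] at hx hx'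
    omega
  unfold cntFn
  rw [h1, Finset.card_union_of_disjoint hdisj]
  congr 1
  split
  · next h =>
    obtain ⟨j0, hj0⟩ := h
    rw [Finset.card_eq_one]
    refine ⟨j0, ?_⟩
    ext x
    simp only [mem_filter, mem_univ, true_and, mem_singleton]
    constructor
    · intro hx; exact hαinj (hx.trans hj0.symm)
    · rintro rfl; exact hj0
  · next h =>
    rw [Finset.card_eq_zero, Finset.filter_eq_empty_iff]
    intro x _ hx
    exact h ⟨x, hx⟩

lemma cntFn_top {m k : ℕ} (α : Fin k → Fin m) : cntFn α m = k := by
  unfold cntFn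
  rw [Finset.filter_true_of_mem (fun j _ => (α j).2), Finset.card_univ, Fintype.card_fin]

lemma cntFn_at_sel {m k : ℕ} (α : Fin k → Fin m) (hα : StrictMono α) (j : Fin k) :
    cntFn α (α j : ℕ) = (j : ℕ) := by
  unfold cntFn
  rw [← aux_card_filter_lt_fin j]
  congr 1
  ext x
  simp only [mem_filter, mem_univ, true_and]
  constructor
  · intro hx
    exact hα.lt_iff_lt.mp (by exact_mod_cast (Fin.mk_lt_mk.mpr hx : (⟨(α x : ℕ), (α x).2⟩ : Fin m) < ⟨(α j : ℕ), (α j).2⟩))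
  · intro hx
    exact hα hx


lemma bwdMap_step {m n k : ℕ} (hm : 3 ≤ m) (hn : 3 ≤ n) (hkn : (k : ZMod n) = 0)
    (α : Fin k → Fin m) (hαinj : Function.Injective fun j => ((α j : ℕ))) (i : ZMod n) (c : ZMod m) :
    bwdMap α i (c + 1) = bwdMap α i c + (if ∃ j, (α j : ℕ) = c.val then 1 else 0) := by
  haveI : NeZero m := ⟨by omega⟩
  haveI : Fact (1 < m) := ⟨by omega⟩
  have hv : c.val < m := ZMod.val_lt c
  by_cases hc : c.val + 1 < m
  · have h1 : (c + 1).val = c.val + 1 := by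
      rw [ZMod.val_add_of_lt (by rw [ZMod.val_one]; omega), ZMod.val_one]
    unfold bwdMap
    rw [h1, cntFn_succ α hαinj]
    split <;> push_cast <;> ring
  · have hcv : c.val = m - 1 := by omega
    have hc1 : c + 1 = 0 := by
      have : c = ((m - 1 : ℕ) : ZMod m) := by
        conv_lhs => rw [← (ZMod.natCast_val c).trans (ZMod.cast_id m c)]
        rw [hcv]
      rw [this]
      have h2 : ((m - 1 : ℕ) : ZMod m) + 1 = (((m - 1) + 1 : ℕ) : ZMod m) := by push_cast; ring
      have h3 : m - 1 + 1 = m := by omega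
      rw [h2, h3, ZMod.natCast_self]
    have hsum : ((cntFn α c.val + (if ∃ j, (α j : ℕ) = c.val then 1 else 0) : ℕ) : ZMod n) = 0 := by
      rw [← cntFn_succ α hαinj, hcv]
      have : m - 1 + 1 = m := by omega
      rw [this, cntFn_top α, hkn]
    unfold bwdMap
    rw [hc1, ZMod.val_zero, cntFn_zero]
    push_cast at hsum ⊢
    rw [add_zero]
    split at hsum <;> split <;> simp_all <;> linear_combination -hsum

lemma bwdMap_val_at_sel {m n k : ℕ} (α : Fin k → Fin m) (hα : StrictMono α)
    (i : ZMod n) (j : Fin k) (c : ZMod m) (hj : (α j : ℕ) = c.val) :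
    bwdMap α i c = i + ((j : ℕ) : ZMod n) := by
  unfold bwdMap
  rw [← hj, cntFn_at_sel α hα j]

lemma backward_dir (m n : ℕ) (hm : 3 ≤ m) (hn : 3 ≤ n)
    (fC : ZMod m → Orient) (fD : ZMod n → Orient) (w : ℕ) (hw : 1 ≤ w) (i : ZMod n)
    (hsub : StarSub (shiftPowStr fD w i) (cycStr fC)) :
    ∃ φ : ZMod m → ZMod n, IsHom (cycRel fC) (cycRel fD) φ ∧ MonMap φ ∧
      HasWind φ (w : ℤ) ∧ φ 0 = i := by
  classical
  haveI : NeZero m := ⟨by omega⟩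
  haveI : NeZero n := ⟨by omega⟩
  obtain ⟨α, hα, hsel⟩ := hsub
  have hαinj : Function.Injective fun j => ((α j : ℕ)) := by
    intro a b h
    exact hα.injective (Fin.val_injective h)
  have hkn : ((w * n : ℕ) : ZMod n) = 0 := by push_cast [ZMod.natCast_self]; ring
  set φ := bwdMap α i with hφ
  have hstep : ∀ c : ZMod m, φ (c + 1) = φ c + (if ∃ j, (α j : ℕ) = c.val then 1 else 0) :=
    fun c => bwdMap_step hm hn hkn α hαinj i c
  -- value at selected points
  have hselval : ∀ (j : Fin (w * n)) (c : ZMod m), (α j : ℕ) = c.val →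
      (fD (φ c) = fC c ∨ fD (φ c) = Orient.star) := by
    intro j c hj
    have h1 : φ c = i + ((j : ℕ) : ZMod n) := bwdMap_val_at_sel α hα i j c hj
    have h2 := hsel j
    unfold shiftPowStr cycStr at h2
    have h3 : ((α j : ℕ) : ZMod m) = c := by
      rw [hj, (ZMod.natCast_val c).trans (ZMod.cast_id m c)]
    rw [h3] at h2
    rw [h1]
    exact h2
  have hφ0 : φ 0 = i := by
    show bwdMap α i 0 = i
    unfold bwdMap
    rw [ZMod.val_zero, cntFn_zero]
    simp
  have hhom : IsHom (cycRel fC) (cycRel fD) φ := by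
    rintro u v (rfl | ⟨rfl, hfwd⟩ | ⟨rfl, hbwd⟩)
    · exact Or.inl rfl
    · by_cases h : ∃ j, (α j : ℕ) = u.val
      · obtain ⟨j, hj⟩ := h
        have h1 : φ (u + 1) = φ u + 1 := by rw [hstep u, if_pos ⟨j, hj⟩]
        refine Or.inr (Or.inl ⟨h1, ?_⟩)
        rcases hselval j u hj with h2 | h2
        · rw [h2]; exact hfwd
        · rw [h2]; trivial
      · have h1 : φ (u + 1) = φ u := by rw [hstep u, if_neg h, add_zero]
        exact Or.inl h1.symm
    · by_cases h : ∃ j, (α j : ℕ) = v.val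
      · obtain ⟨j, hj⟩ := h
        have h1 : φ (v + 1) = φ v + 1 := by rw [hstep v, if_pos ⟨j, hj⟩]
        refine Or.inr (Or.inr ⟨h1, ?_⟩)
        rcases hselval j v hj with h2 | h2
        · rw [h2]; exact hbwd
        · rw [h2]; trivial
      · have h1 : φ (v + 1) = φ v := by rw [hstep v, if_neg h, add_zero]
        exact Or.inl h1
  have hmon : MonMap φ := by
    left
    constructor
    · intro c
      rw [hstep c]
      split
      · exact Or.inl rfl
      · exact Or.inr (by rw [add_zero])
    · have hpos : 0 < w * n := by positivity
      set j0 : Fin (w * n) := ⟨0, hpos⟩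
      refine ⟨((α j0 : ℕ) : ZMod m), ?_⟩
      have hv : (((α j0 : ℕ) : ZMod m)).val = (α j0 : ℕ) := ZMod.val_natCast_of_lt (α j0).2
      rw [hstep _, if_pos ⟨j0, hv.symm⟩]
  have hwind : HasWind φ (w : ℤ) := by
    unfold HasWind increase
    have hedge : ∀ t ∈ Finset.range m, edgeVal φ ((t : ℕ) : ZMod m)
        = if ∃ j, (α j : ℕ) = t then 1 else 0 := by
      intro t ht
      have hv : (((t : ℕ) : ZMod m)).val = t := ZMod.val_natCast_of_lt (Finset.mem_range.mp ht)
      set c := ((t : ℕ) : ZMod m)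
      unfold edgeVal
      rw [hstep c, hv]
      by_cases h : ∃ j, (α j : ℕ) = t
      · rw [if_pos h, if_pos h, if_pos rfl]
      · rw [if_neg h, if_neg h, add_zero, if_neg (fun hh => aux_add_one_ne hn (φ c) hh.symm),
          if_neg (fun hh => aux_sub_one_ne hn (φ c) hh)]
    rw [Finset.sum_congr rfl hedge, Finset.sum_boole]
    have himg : ((Finset.range m).filter fun t => ∃ j, (α j : ℕ) = t)
        = Finset.univ.image (fun j => (α j : ℕ)) := by
      ext x
      simp only [Finset.mem_filter, Finset.mem_range, Finset.mem_image, Finset.mem_univ, true_and]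
      constructor
      · rintro ⟨_, j, rfl⟩; exact ⟨j, rfl⟩
      · rintro ⟨j, rfl⟩; exact ⟨(α j).2, j, rfl⟩
    rw [himg, Finset.card_image_of_injective _ hαinj, Finset.card_univ, Fintype.card_fin]
    push_cast; ring
  exact ⟨φ, hhom, hmon, hwind, hφ0⟩

lemma forward_dir (m n : ℕ) (hm : 3 ≤ m) (hn : 3 ≤ n)
    (fC : ZMod m → Orient) (fD : ZMod n → Orient) (w : ℕ) (hw : 1 ≤ w) (i : ZMod n)
    (φ : ZMod m → ZMod n) (hhom : IsHom (cycRel fC) (cycRel fD) φ) (hmon : MonMap φ)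
    (hwind : HasWind φ (w : ℤ)) (hφ0 : φ 0 = i) :
    StarSub (shiftPowStr fD w i) (cycStr fC) := by
  classical
  haveI : NeZero m := ⟨by omega⟩
  haveI : NeZero n := ⟨by omega⟩
  unfold HasWind at hwind
  -- φ is increasing
  have hinc : ∀ c, φ (c + 1) = φ c + 1 ∨ φ (c + 1) = φ c := by
    rcases hmon with ⟨h, _⟩ | hdec
    · exact h
    · exfalso
      have hev : ∀ c, edgeVal φ c = -1 := by
        intro c
        unfold edgeVal
        rw [hdec c, if_neg (aux_add_ne_sub hn (φ c)), if_pos rfl]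
      have : increase φ = -(m : ℤ) := by
        unfold increase
        rw [Finset.sum_congr rfl (fun t _ => hev _), Finset.sum_const, Finset.card_range]
        simp
      rw [this] at hwind
      have hw' : (1 : ℤ) ≤ w := by exact_mod_cast hw
      have hn' : (3 : ℤ) ≤ n := by exact_mod_cast hn
      have hm' : (3 : ℤ) ≤ m := by exact_mod_cast hm
      nlinarith
  set S : Finset ℕ :=
    (Finset.range m).filter fun t => φ (((t : ℕ) : ZMod m) + 1) = φ ((t : ℕ) : ZMod m) + 1 with hS
  have hedge : ∀ t : ℕ, edgeVal φ ((t : ℕ) : ZMod m)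
      = if φ (((t : ℕ) : ZMod m) + 1) = φ ((t : ℕ) : ZMod m) + 1 then 1 else 0 := by
    intro t
    set c := ((t : ℕ) : ZMod m)
    rcases hinc c with h1 | h1
    · unfold edgeVal; rw [h1, if_pos rfl, if_pos rfl]
    · have hne : φ (c + 1) ≠ φ c + 1 := by rw [h1]; exact fun h => aux_add_one_ne hn (φ c) h.symm
      have hne2 : φ (c + 1) ≠ φ c - 1 := by rw [h1]; exact aux_sub_one_ne hn (φ c)
      unfold edgeVal; rw [if_neg hne, if_neg hne2, if_neg hne]
  have hScard : S.card = w * n := by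
    have h1 : increase φ = (S.card : ℤ) := by
      unfold increase
      rw [Finset.sum_congr rfl (fun t _ => hedge t), Finset.sum_boole]
    have : (S.card : ℤ) = (w : ℤ) * n := by rw [← h1, hwind]
    exact_mod_cast this
  -- value of φ along the cycle
  have hval : ∀ t : ℕ, t ≤ m → φ ((t : ℕ) : ZMod m) = i + (((S.filter (· < t)).card : ℕ) : ZMod n) := by
    intro t
    induction t with
    | zero => intro _; simpa using hφ0
    | succ t ih =>
      intro ht
      have ht' : t < m := ht
      have hc : (((t + 1 : ℕ)) : ZMod m) = ((t : ℕ) : ZMod m) + 1 := by push_cast; ring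
      have hunion : S.filter (· < t + 1) = S.filter (· < t) ∪ S.filter (· = t) := by
        ext x
        simp only [Finset.mem_union, Finset.mem_filter]
        constructor
        · rintro ⟨hx, hlt⟩
          rcases Nat.lt_succ_iff_lt_or_eq.mp hlt with h | h
          exacts [Or.inl ⟨hx, h⟩, Or.inr ⟨hx, h⟩]
        · rintro (⟨hx, h⟩ | ⟨hx, rfl⟩)
          exacts [⟨hx, Nat.lt_succ_of_lt h⟩, ⟨hx, Nat.lt_succ_self _⟩]
      have hdisj : Disjoint (S.filter (· < t)) (S.filter (· = t)) := by
        rw [Finset.disjoint_left]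
        intro x hx hx'
        simp only [Finset.mem_filter] at hx hx'
        omega
      have hcard : (S.filter (· < t + 1)).card
          = (S.filter (· < t)).card + (S.filter (· = t)).card := by
        rw [hunion, Finset.card_union_of_disjoint hdisj]
      have hmemS : t ∈ S ↔ φ (((t : ℕ) : ZMod m) + 1) = φ ((t : ℕ) : ZMod m) + 1 := by
        rw [hS, Finset.mem_filter, Finset.mem_range]
        exact ⟨fun h => h.2, fun h => ⟨ht', h⟩⟩
      rw [Finset.filter_eq'] at hcard
      by_cases h : φ (((t : ℕ) : ZMod m) + 1) = φ ((t : ℕ) : ZMod m) + 1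
      · rw [hc, h, ih (le_of_lt ht'), hcard, if_pos (hmemS.mpr h), Finset.card_singleton]
        push_cast; ring
      · have h0 : φ (((t : ℕ) : ZMod m) + 1) = φ ((t : ℕ) : ZMod m) := (hinc _).resolve_left h
        rw [hc, h0, ih (le_of_lt ht'), hcard, if_neg (fun hh => h (hmemS.mp hh)),
          Finset.card_empty, Nat.add_zero]
  -- the selection function
  set e := S.orderIsoOfFin hScard with he
  have hmem : ∀ j : Fin (w * n), ((e j : ℕ)) ∈ S := fun j => (e j).2
  have hlt : ∀ j : Fin (w * n), ((e j : ℕ)) < m :=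
    fun j => Finset.mem_range.mp (Finset.mem_filter.mp (hmem j)).1
  refine ⟨fun j => ⟨(e j : ℕ), hlt j⟩, ?_, ?_⟩
  · intro a b hab
    exact Fin.mk_lt_mk.mpr (Subtype.coe_lt_coe.mpr (e.strictMono hab))
  · intro j
    have hcount : (S.filter (· < (e j : ℕ))).card = (j : ℕ) := by
      have himg : S.filter (· < (e j : ℕ))
          = (Finset.univ.filter (fun j' : Fin (w * n) => j' < j)).image (fun j' => ((e j' : ℕ))) := by
        ext x
        simp only [Finset.mem_filter, Finset.mem_image, Finset.mem_univ, true_and]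
        constructor
        · rintro ⟨hx, hlt'⟩
          refine ⟨e.symm ⟨x, hx⟩, ?_, ?_⟩
          · have h1 : e (e.symm ⟨x, hx⟩) < e j := by
              rw [e.apply_symm_apply]
              exact Subtype.coe_lt_coe.mp (by exact_mod_cast hlt')
            exact e.lt_iff_lt.mp h1
          · rw [e.apply_symm_apply]
        · rintro ⟨j', hj', rfl⟩
          exact ⟨(e j').2, Subtype.coe_lt_coe.mpr (e.strictMono hj')⟩
      rw [himg, Finset.card_image_of_injective _
        (fun a b hab => e.injective (Subtype.coe_injective hab)), aux_card_filter_lt_fin j]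
    set t := (e j : ℕ) with htdef
    set c := ((t : ℕ) : ZMod m) with hcdef
    have hφc : φ c = i + ((j : ℕ) : ZMod n) := by
      rw [hcdef, hval t (le_of_lt (hlt j)), hcount]
    have hincr : φ (c + 1) = φ c + 1 := (Finset.mem_filter.mp (hmem j)).2
    unfold shiftPowStr cycStr
    show fD (i + ((j : ℕ) : ZMod n)) = fC c ∨ fD (i + ((j : ℕ) : ZMod n)) = Orient.star
    rw [← hφc]
    cases hcase : fC c with
    | plus =>
      have harc : cycRel fC c (c + 1) := Or.inr (Or.inl ⟨rfl, by rw [hcase]; trivial⟩)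
      have h1 := hhom _ _ harc
      rw [hincr] at h1
      rcases h1 with h1 | ⟨_, h2⟩ | ⟨h1, _⟩
      · exact absurd h1.symm (aux_add_one_ne hn (φ c))
      · rcases fwd_cases h2 with h3 | h3
        · exact Or.inl (by rw [h3])
        · exact Or.inr h3
      · exact absurd h1 (aux_ne_add_two hn (φ c))
    | minus =>
      have harc : cycRel fC (c + 1) c := Or.inr (Or.inr ⟨rfl, by rw [hcase]; trivial⟩)
      have h1 := hhom _ _ harc
      rw [hincr] at h1
      rcases h1 with h1 | ⟨h1, _⟩ | ⟨_, h2⟩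
      · exact absurd h1 (aux_add_one_ne hn (φ c))
      · exact absurd h1 (aux_ne_add_two hn (φ c))
      · rcases bwd_cases h2 with h3 | h3
        · exact Or.inl (by rw [h3])
        · exact Or.inr h3
    | star =>
      have harc1 : cycRel fC c (c + 1) := Or.inr (Or.inl ⟨rfl, by rw [hcase]; trivial⟩)
      have harc2 : cycRel fC (c + 1) c := Or.inr (Or.inr ⟨rfl, by rw [hcase]; trivial⟩)
      have h1 := hhom _ _ harc1
      have h2 := hhom _ _ harc2
      rw [hincr] at h1 h2
      have hfwd : (fD (φ c)).fwd := by
        rcases h1 with h1 | ⟨_, h⟩ | ⟨h1, _⟩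
        · exact absurd h1.symm (aux_add_one_ne hn (φ c))
        · exact h
        · exact absurd h1 (aux_ne_add_two hn (φ c))
      have hbwd : (fD (φ c)).bwd := by
        rcases h2 with h1 | ⟨h1, _⟩ | ⟨_, h⟩
        · exact absurd h1 (aux_add_one_ne hn (φ c))
        · exact absurd h1 (aux_ne_add_two hn (φ c))
        · exact h
      right
      cases hh : fD (φ c) <;> rw [hh] at hfwd hbwd <;> first | rfl | exact absurd hfwd id | exact absurd hbwd id

end AuxProof

/-- For digraph cycles `C`, `D`, an integer `w ≥ 1` and a vertex `i` of
`D`, there is a wind-`w` monotone homomorphism `φ : C → D` with `φ c₀ = i` iff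
`σ^i(D^w) ≤* C`. -/
theorem monotone_wind_w_iff_star_substring (m n : ℕ) (hm : 3 ≤ m) (hn : 3 ≤ n)
    (fC : ZMod m → Orient) (fD : ZMod n → Orient) (w : ℕ) (hw : 1 ≤ w) (i : ZMod n) :
    (∃ φ : ZMod m → ZMod n, IsHom (cycRel fC) (cycRel fD) φ ∧ MonMap φ ∧
        HasWind φ (w : ℤ) ∧ φ 0 = i) ↔
      StarSub (shiftPowStr fD w i) (cycStr fC) := by
  constructor
  · rintro ⟨φ, h1, h2, h3, h4⟩
    exact forward_dir m n hm hn fC fD w hw i φ h1 h2 h3 h4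
  · intro h
    exact backward_dir m n hm hn fC fD w hw i h

end Recon
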